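/- arXiv:0911.1361 — 2 statements merged into one kernel-verified Lean document; each statement's English description precedes it below -/
import Mathlib

section
/- If φ(x;y) is independent (has the independence property), then there is a model M, a set B in M, and a φ-type p over B such that no elementary φ-extension of p is φ-isolated. More precisely: if B is an infinite φ-independent set, then for any elementary extension (N;B') of the pair (M;B) and any extension p' of p to a φ-type with domain contained in B', p' is not φ-isolated. -/
open FirstOrder

universe u u' v w

namespace IET

/-- Bundled models of the complete theory of `M` (elementary-extension candidates). -/
abbrev MT (L : FirstOrder.Language.{v, w}) (M : Type u) [L.Structure M] :=
  Language.Theory.ModelType.{v, w, max u v w} (L.completeTheory M)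

variable (L : FirstOrder.Language.{v, w}) (M : Type u) [L.Structure M]

/-- Consistency of a set of signed `φ`-instances with parameters in `M`:
simultaneous realization in some elementary extension of `M`. -/
def Consistent (φ : L.Formula (Fin 2)) (X : Set (M × Bool)) : Prop :=
  ∃ (N : MT L M) (f : M ↪ₑ[L] N) (a : N),
    ∀ q ∈ X, (φ.Realize ![a, f q.1] ↔ q.2 = true)

/-- The set of signed instances `{φ(x;b)^(s b) : b ∈ B}`. -/
def typeSet (B : Set M) (s : M → Bool) : Set (M × Bool) :=
  {q | q.1 ∈ B ∧ s q.1 = q.2}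

/-- `s` determines a (complete, consistent) φ-type over `B`. -/
def IsPhiType (φ : L.Formula (Fin 2)) (B : Set M) (s : M → Bool) : Prop :=
  Consistent L M φ (typeSet M B s)

/-- `B` is φ-independent: every sign pattern over `B` is consistent. -/
def PhiIndep (φ : L.Formula (Fin 2)) (B : Set M) : Prop :=
  ∀ s : M → Bool, Consistent L M φ (typeSet M B s)

/-- The space `S_φ(B)` of complete φ-types over `B`. -/
def Sphi (φ : L.Formula (Fin 2)) (B : Set M) : Set (B → Bool) :=
  {s | Consistent L M φ {q | ∃ h : q.1 ∈ B, s ⟨q.1, h⟩ = q.2}}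

/-- The set of signed instances `X₀` entails the set `X` (in every elementary
extension of `M`). -/
def EntailsIn (φ : L.Formula (Fin 2)) (X₀ X : Set (M × Bool)) : Prop :=
  ∀ (N : MT L M) (f : M ↪ₑ[L] N) (a : N),
    (∀ q ∈ X₀, (φ.Realize ![a, f q.1] ↔ q.2 = true)) →
    ∀ q ∈ X, (φ.Realize ![a, f q.1] ↔ q.2 = true)

/-- A φ-type (given as a set of signed instances) is φ-isolated if some finite
subtype entails it. -/
def PhiIsolated (φ : L.Formula (Fin 2)) (X : Set (M × Bool)) : Prop :=
  ∃ X₀ ⊆ X, X₀.Finite ∧ EntailsIn L M φ X₀ X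

/-- `φ` has independence dimension `n`: some φ-independent set of size `n` exists
in an elementary extension of `M`, and every φ-independent set in any elementary
extension of `M` is finite of size at most `n`. -/
def HasID (φ : L.Formula (Fin 2)) (n : ℕ) : Prop :=
  (∃ (N : MT L M) (_ : M ↪ₑ[L] N) (B : Set N),
      B.Finite ∧ B.ncard = n ∧ PhiIndep L N φ B) ∧
    ∀ (N : MT L M) (_ : M ↪ₑ[L] N) (B : Set N),
      PhiIndep L N φ B → B.Finite ∧ B.ncard ≤ n

/-- A language with a single unary relation symbol `P`. -/
def unaryLang : FirstOrder.Language.{0, 0} :=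
  ⟨fun _ => Empty, fun n => PLift (n = 1)⟩

/-- Interpret the unary predicate as membership in `B`. -/
def unaryStr (B : Set M) : (unaryLang).Structure M where
  funMap := fun f _ => f.elim
  RelMap := fun r v => v (Fin.cast r.down.symm 0) ∈ B

/-- The pair structure `(M; B)` in the language `L ∪ {P}`. -/
def pairStr (B : Set M) : (L.sum unaryLang).Structure M :=
  @Language.sumStructure L unaryLang M _ (unaryStr M B)

/-- An elementary embedding of pairs `(M; B) ⪯ (N; B')` in the language `L ∪ {P}`. -/
def PairEmb (B : Set M) (N : Type u') [L.Structure N] (B' : Set N) : Type _ :=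
  @FirstOrder.Language.ElementaryEmbedding (L.sum unaryLang) M N
    (pairStr L M B) (pairStr L N B')

/-- The underlying map of an elementary embedding of pairs. -/
def pairFn {L₀ : FirstOrder.Language.{v, w}} {M₀ : Type u} [L₀.Structure M₀] {B : Set M₀}
    {N : Type u'} [L₀.Structure N] {B' : Set N}
    (g : PairEmb L₀ M₀ B N B') : M₀ → N :=
  @FirstOrder.Language.ElementaryEmbedding.toFun (L₀.sum unaryLang) M₀ N
    (pairStr L₀ M₀ B) (pairStr L₀ N B') g

section Aux

open FirstOrder.Language

variable {L' : FirstOrder.Language.{v, w}}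

lemma fin2_comp {S T : Type*} (f : S → T) (a b : S) :
    f ∘ ![a, b] = ![f a, f b] := by
  funext k
  fin_cases k <;> rfl

/-- One signed instance `φ(x; y_i)` where `x` is `Sum.inr ()`. -/
noncomputable def instF (φ : L'.Formula (Fin 2)) (n : ℕ) (i : Fin n) :
    L'.Formula (Fin n ⊕ Unit) :=
  φ.relabel (fun k : Fin 2 => if k = 0 then Sum.inr () else Sum.inl i)

lemma realize_instF {S : Type*} [L'.Structure S] (φ : L'.Formula (Fin 2)) {n : ℕ}
    (i : Fin n) (u : Fin n ⊕ Unit → S) :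
    (instF φ n i).Realize u ↔ φ.Realize ![u (Sum.inr ()), u (Sum.inl i)] := by
  rw [instF, Language.Formula.realize_relabel]
  have h : (u ∘ fun k : Fin 2 => if k = 0 then Sum.inr () else Sum.inl i)
      = ![u (Sum.inr ()), u (Sum.inl i)] := by
    funext k; fin_cases k <;> simp
  rw [h]

/-- `∃ x, ⋀ i φ(x, y_i)^(ε i)` as an `L`-formula with free variables `Fin n`. -/
noncomputable def chiF (φ : L'.Formula (Fin 2)) (n : ℕ) (ε : Fin n → Bool) :
    L'.Formula (Fin n) :=
  Formula.iExs Unit <| BoundedFormula.iInf fun i : Fin n =>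
    if ε i then instF φ n i else (instF φ n i).not

lemma realize_chiF {S : Type*} [L'.Structure S] (φ : L'.Formula (Fin 2)) {n : ℕ}
    (ε : Fin n → Bool) (v : Fin n → S) :
    (chiF φ n ε).Realize v ↔ ∃ a : S, ∀ i, (φ.Realize ![a, v i] ↔ ε i = true) := by
  rw [chiF, Formula.realize_iExs]
  constructor
  · rintro ⟨w, hw⟩
    have hw' := BoundedFormula.realize_iInf.1 hw
    refine ⟨w (), fun i => ?_⟩
    have h := hw' i
    cases hε : ε i
    · simp only [hε, Bool.false_eq_true, if_false] at h
      rw [BoundedFormula.realize_not] at h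
      have h2 : ¬ (instF φ n i).Realize (fun a => Sum.elim v w (id a)) := h
      rw [realize_instF] at h2
      simp only [id_eq, Sum.elim_inr, Sum.elim_inl] at h2
      simp [hε, h2]
    · simp only [hε, if_true] at h
      have h2 : (instF φ n i).Realize (fun a => Sum.elim v w (id a)) := h
      rw [realize_instF] at h2
      simp only [id_eq, Sum.elim_inr, Sum.elim_inl] at h2
      simp [hε, h2]
  · rintro ⟨a, ha⟩
    refine ⟨fun _ => a, ?_⟩
    refine BoundedFormula.realize_iInf.2 fun i => ?_
    cases hε : ε i
    · simp only [hε, Bool.false_eq_true, if_false]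
      rw [BoundedFormula.realize_not]
      intro hcon
      have h2 : (instF φ n i).Realize (fun x => Sum.elim v (fun _ : Unit => a) (id x)) := hcon
      rw [realize_instF] at h2
      simp only [id_eq, Sum.elim_inr, Sum.elim_inl] at h2
      have := (ha i).1 h2
      simp [hε] at this
    · simp only [hε, if_true]
      have h2 : φ.Realize ![a, v i] := (ha i).2 hε
      exact (realize_instF φ i (fun x => Sum.elim v (fun _ : Unit => a) (id x))).2 h2

/-- The hypothesis: all `y_i` satisfy `P` and are pairwise distinct. -/
noncomputable def hypF (n : ℕ) : (L'.sum unaryLang).Formula (Fin n) :=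
  (BoundedFormula.iInf fun i : Fin n =>
      Language.Relations.formula
        (Sum.inr (PLift.up rfl) : (L'.sum unaryLang).Relations 1) ![Language.Term.var i]) ⊓
  BoundedFormula.iInf
    (fun p : {p : Fin n × Fin n // p.1 ≠ p.2} => (Language.Term.equal (Language.Term.var p.1.1) (Language.Term.var p.1.2)).not)

/-- The sentence expressing `n`-independence of `P` with sign pattern `ε`. -/
noncomputable def sigmaF (φ : L'.Formula (Fin 2)) (n : ℕ) (ε : Fin n → Bool) :
    (L'.sum unaryLang).Sentence :=
  Formula.iAlls (Fin n) (((hypF n).imp (LHom.sumInl.onFormula (chiF φ n ε))).relabel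
    (Sum.inr : Fin n → Empty ⊕ Fin n))

lemma realize_sigmaF {S : Type u'} [L'.Structure S] (B : Set S) (φ : L'.Formula (Fin 2))
    {n : ℕ} (ε : Fin n → Bool) :
    (@Language.Sentence.Realize (L'.sum unaryLang) S (pairStr L' S B) (sigmaF φ n ε)) ↔
      ∀ c : Fin n → S, (∀ i, c i ∈ B) → Function.Injective c →
        ∃ a : S, ∀ i, (φ.Realize ![a, c i] ↔ ε i = true) := by
  letI iU : unaryLang.Structure S := unaryStr S B
  have hps : pairStr L' S B = Language.sumStructure L' unaryLang S := rfl
  rw [hps, sigmaF]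
  constructor
  · intro h c hB hinj
    have h1 := Formula.realize_iAlls.mp h c
    rw [Formula.realize_relabel, Formula.realize_imp] at h1
    have h2 := h1 ?_
    · rw [LHom.realize_onFormula, realize_chiF] at h2
      obtain ⟨a, ha⟩ := h2
      exact ⟨a, fun i => ha i⟩
    · rw [hypF, Formula.realize_inf]
      constructor
      · refine BoundedFormula.realize_iInf.2 fun i => ?_
        exact Formula.realize_rel.2 (hB i)
      · refine BoundedFormula.realize_iInf.2 fun ⟨p, hp⟩ => ?_
        rw [BoundedFormula.realize_not]
        intro hcon
        have hcon' : (Language.Term.equal (Language.Term.var p.1)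
            (Language.Term.var p.2)).Realize
            (fun a => Sum.elim (default : Empty → S) c (Sum.inr a)) := hcon
        rw [Formula.realize_equal] at hcon'
        exact hp (hinj hcon')
  · intro H
    refine Formula.realize_iAlls.mpr fun c => ?_
    rw [Formula.realize_relabel, Formula.realize_imp]
    intro hc
    rw [hypF, Formula.realize_inf] at hc
    obtain ⟨h1, h2⟩ := hc
    have hB : ∀ i, c i ∈ B := fun i =>
      Formula.realize_rel.1 (BoundedFormula.realize_iInf.1 h1 i)
    have hinj : Function.Injective c := by
      intro i j hij
      by_contra hne
      have h3 := BoundedFormula.realize_iInf.1 h2 ⟨(i, j), hne⟩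
      rw [BoundedFormula.realize_not] at h3
      exact h3 (Formula.realize_equal.2 hij)
    obtain ⟨a, ha⟩ := H c hB hinj
    rw [LHom.realize_onFormula, realize_chiF]
    exact ⟨a, fun i => ha i⟩

end Aux

/-- A φ-independent set makes the pair `(M; B)` a model of each sentence `σ_{n,ε}`. -/
lemma models_sigmaF {φ : L.Formula (Fin 2)} {B : Set M}
    (hind : PhiIndep L M φ B) {n : ℕ} (ε : Fin n → Bool) :
    @Language.Sentence.Realize (L.sum unaryLang) M (pairStr L M B) (sigmaF φ n ε) := by
  classical
  rw [realize_sigmaF]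
  intro c hB hinj
  set s : M → Bool := fun m => if h : ∃ i, c i = m then ε h.choose else true with hs
  have hsc : ∀ i, s (c i) = ε i := by
    intro i
    have hex : ∃ j, c j = c i := ⟨i, rfl⟩
    rw [hs]
    simp only
    rw [dif_pos hex]
    congr 1
    exact hinj hex.choose_spec
  obtain ⟨N₀, f, a, ha⟩ := hind s
  have hchi : (chiF φ n ε).Realize (f ∘ c) := by
    rw [realize_chiF]
    exact ⟨a, fun i => ha (c i, ε i) ⟨hB i, hsc i⟩⟩
  rw [f.map_formula (chiF φ n ε) c, realize_chiF] at hchi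
  exact hchi

/-- if `B` is an infinite φ-independent set, then for any elementary
extension `(N; B')` of the pair `(M; B)`, no extension of a φ-type `p` over `B` to a
φ-type with domain contained in `B'` is φ-isolated. -/
theorem no_isolated_extension_of_independent (φ : L.Formula (Fin 2)) (B : Set M)
    (hinf : B.Infinite) (hind : PhiIndep L M φ B)
    (p : M → Bool) (hp : IsPhiType L M φ B p)
    (N : Type u') [L.Structure N] (B' : Set N) (g : PairEmb L M B N B')
    (D : Set N) (s' : N → Bool) (hD : D ⊆ B')
    (hext : ∀ b ∈ B, pairFn g b ∈ D ∧ s' (pairFn g b) = p b)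
    (htype : IsPhiType L N φ D s') :
    ¬ PhiIsolated L N φ (typeSet N D s') := by
  classical
  rintro ⟨X₀, hsub, hfin, hent⟩
  -- the finite parameter set of `X₀`
  set D₀ : Set N := Prod.fst '' X₀ with hD₀
  have hD₀fin : D₀.Finite := hfin.image _
  have hD₀D : D₀ ⊆ D := by
    rintro _ ⟨q, hq, rfl⟩
    exact (hsub hq).1
  -- `g` is injective
  have hginj : Function.Injective (pairFn g) :=
    @FirstOrder.Language.ElementaryEmbedding.injective (L.sum unaryLang) M N
      (pairStr L M B) (pairStr L N B') g
  -- choose `b ∈ B` whose image avoids `D₀`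
  have hpre : ((pairFn g) ⁻¹' D₀).Finite :=
    Set.Finite.preimage (Set.injOn_of_injective hginj) hD₀fin
  obtain ⟨b, hb⟩ := (hinf.diff hpre).nonempty
  have hbB : b ∈ B := hb.1
  have hbd : pairFn g b ∉ D₀ := hb.2
  have hgbD : pairFn g b ∈ D := (hext b hbB).1
  -- enumerate `D₀ ∪ {g b}`
  set F : Finset N := hD₀fin.toFinset with hF
  set m : ℕ := F.card with hm
  set c0 : Fin m → N := fun i => ((F.equivFin.symm i : F) : N) with hc0
  have hc0inj : Function.Injective c0 := by
    intro i j hij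
    exact F.equivFin.symm.injective (Subtype.ext hij)
  have hc0mem : ∀ i, c0 i ∈ D₀ := by
    intro i
    have := (F.equivFin.symm i).2
    exact hD₀fin.mem_toFinset.1 this
  set c : Fin (m + 1) → N := Fin.snoc c0 (pairFn g b) with hc
  set t : N → Bool := fun x => if x = pairFn g b then !(s' (pairFn g b)) else s' x with ht
  have hclast : c (Fin.last m) = pairFn g b := by
    rw [hc]; exact Fin.snoc_last _ _
  have hccast : ∀ i : Fin m, c i.castSucc = c0 i := by
    intro i; rw [hc]; exact Fin.snoc_castSucc _ _ _
  have hcB' : ∀ i, c i ∈ B' := by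
    intro i
    rcases Fin.eq_castSucc_or_eq_last i with ⟨j, rfl⟩ | rfl
    · rw [hccast]; exact hD (hD₀D (hc0mem j))
    · rw [hclast]; exact hD hgbD
  have hcinj : Function.Injective c := by
    intro i j hij
    rcases Fin.eq_castSucc_or_eq_last i with ⟨i', rfl⟩ | rfl <;>
      rcases Fin.eq_castSucc_or_eq_last j with ⟨j', rfl⟩ | rfl
    · rw [hccast, hccast] at hij
      exact congrArg Fin.castSucc (hc0inj hij)
    · rw [hccast, hclast] at hij
      exact absurd (hij ▸ hc0mem i') hbd
    · rw [hclast, hccast] at hij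
      exact absurd (hij.symm ▸ hc0mem j') hbd
    · rfl
  -- the independence sentence transfers along `g`
  have hσM := models_sigmaF L M hind (fun i : Fin (m + 1) => t (c i))
  have hσN : @Language.Sentence.Realize (L.sum unaryLang) N (pairStr L N B')
      (sigmaF φ (m + 1) (fun i : Fin (m + 1) => t (c i))) :=
    (@FirstOrder.Language.ElementaryEmbedding.map_sentence (L.sum unaryLang) M N
      (pairStr L M B) (pairStr L N B') g _).1 hσM
  obtain ⟨a, ha⟩ := (realize_sigmaF B' φ _).1 hσN c hcB' hcinj
  -- pass to a model where `s'` is realized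
  obtain ⟨N₁, f, a₁, -⟩ := htype
  have hfa : ∀ q ∈ X₀, φ.Realize ![f a, f q.1] ↔ q.2 = true := by
    intro q hq
    have hq1 : q.1 ∈ D₀ := ⟨q, hq, rfl⟩
    set j : Fin m := F.equivFin ⟨q.1, (hD₀fin.mem_toFinset).2 hq1⟩ with hj
    have hcj : c j.castSucc = q.1 := by
      rw [hccast, hc0, hj]
      simp
    have hne : q.1 ≠ pairFn g b := fun h => hbd (h ▸ hq1)
    have h1 := ha j.castSucc
    rw [hcj] at h1
    rw [ht] at h1
    simp only [if_neg hne] at h1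
    have hq2 : s' q.1 = q.2 := (hsub hq).2
    rw [← fin2_comp (⇑f) a q.1, f.map_formula φ ![a, q.1] ]
    rw [h1, hq2]
  have hkey := hent N₁ f (f a) hfa (pairFn g b, s' (pairFn g b)) ⟨hgbD, rfl⟩
  have hlast := ha (Fin.last m)
  rw [hclast, ht] at hlast
  simp only [if_pos rfl] at hlast
  rw [← fin2_comp (⇑f) a (pairFn g b), f.map_formula φ ![a, pairFn g b] ] at hkey
  rw [hlast] at hkey
  cases hs : s' (pairFn g b) <;> rw [hs] at hkey <;> simp at hkey
end IET
end

section
/- Any good configuration of a φ-type p has size at most ID(φ), the independence dimension of φ. That is, if C = {c_{i,t} : i < K, t < 2} is a good configuration of p, then K ≤ n = ID(φ). -/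
open FirstOrder

universe u u' v w

namespace IET

variable (L : FirstOrder.Language.{v, w}) (M : Type u) [L.Structure M]

/-- `b` realizes the partial type `Θ(y)` over `∅`. -/
def RealizesTheta (Θ : Set (L.Formula Unit)) (b : M) : Prop :=
  ∀ θ ∈ Θ, θ.Realize (fun _ : Unit => b)

/-- Truth of the Δ-instance `∃x (φ(x;c)^t ∧ ⋀_i φ(x; z i)^(s i))`. -/
def DeltaHolds (φ : L.Formula (Fin 2)) {n : ℕ} (t : Bool) (s : Fin n → Bool)
    (z : Fin n → M) (c : M) : Prop :=
  ∃ a : M, (φ.Realize ![a, c] ↔ t = true) ∧ ∀ i, (φ.Realize ![a, z i] ↔ s i = true)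

/-- `c` and `c'` have the same Δ-type over `A`, where
`Δ(y; z₀, …, z_{n-1}) = {∃x (φ(x;y)^t ∧ ⋀_i φ(x;z_i)^(s i)) : t < 2, s ∈ 2^n}`. -/
def SameDeltaType (φ : L.Formula (Fin 2)) (n : ℕ) (c c' : M) (A : Set M) : Prop :=
  ∀ (t : Bool) (s : Fin n → Bool) (z : Fin n → M), (∀ i, z i ∈ A) →
    (DeltaHolds L M φ t s z c ↔ DeltaHolds L M φ t s z c')

/-- The signed instances `{φ(x; c i t)^t : i < K, t < 2}` of a configuration. -/
def configSet {K : ℕ} (c : Fin K → Bool → M) : Set (M × Bool) :=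
  {q | ∃ i t, q = (c i t, t)}

/-- The underlying set of elements of a configuration. -/
def cSet {K : ℕ} (c : Fin K → Bool → M) : Set M := {x | ∃ i t, x = c i t}

/-- A good configuration of the φ-type `p` over `B` of size `K`. -/
def GoodConfig (φ : L.Formula (Fin 2)) (n : ℕ) (Θ : Set (L.Formula Unit)) (B : Set M)
    (p : M → Bool) (K : ℕ) (c : Fin K → Bool → M) : Prop :=
  (∀ i t, RealizesTheta L M Θ (c i t)) ∧
  Consistent L M φ (typeSet M B p ∪ configSet M c) ∧
  ∀ (s : Fin K → Bool) (j : Fin K),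
    SameDeltaType L M φ n (c j false) (c j true)
      (B ∪ {x | ∃ i, i ≠ j ∧ x = c i (s i)})

/-- The Δ-type of `d` over `A` is finitely satisfiable in `B`. -/
def DeltaTypeFinSat (φ : L.Formula (Fin 2)) (n : ℕ) (d : M) (A B : Set M) : Prop :=
  ∀ F : Finset (Bool × (Fin n → Bool) × (Fin n → M)),
    (∀ q ∈ F, ∀ i, q.2.2 i ∈ A) →
    ∃ b ∈ B, ∀ q ∈ F,
      (DeltaHolds L M φ q.1 q.2.1 q.2.2 d ↔ DeltaHolds L M φ q.1 q.2.1 q.2.2 b)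


noncomputable def sgnF (φ : L.Formula (Fin 2)) : Bool → L.Formula (Fin 2)
  | true => φ
  | false => φ.not

lemma realize_sgnF (φ : L.Formula (Fin 2)) (b : Bool) (v : Fin 2 → M) :
    (sgnF L φ b).Realize v ↔ (φ.Realize v ↔ b = true) := by
  cases b <;> simp [sgnF]

noncomputable def deltaF (φ : L.Formula (Fin 2)) (n : ℕ) (t : Bool) (s : Fin n → Bool) :
    L.Formula (Option (Fin n)) :=
  Language.Formula.iExs Unit
    ((sgnF L φ t).relabel (![Sum.inr (), Sum.inl none]) ⊓
      Language.BoundedFormula.iInf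
        (fun i => (sgnF L φ (s i)).relabel (![Sum.inr (), Sum.inl (some i)])))

lemma realize_deltaF (φ : L.Formula (Fin 2)) {n : ℕ} (t : Bool) (s : Fin n → Bool)
    (z : Fin n → M) (cc : M) :
    (deltaF L φ n t s).Realize (fun o => o.elim cc z) ↔ DeltaHolds L M φ t s z cc := by
  rw [deltaF, Language.Formula.realize_iExs]
  constructor
  · rintro ⟨i, hi⟩
    rw [Language.Formula.realize_inf] at hi
    obtain ⟨h1, h2⟩ := hi
    rw [Language.Formula.realize_relabel] at h1
    refine ⟨i (), ?_, ?_⟩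
    · rw [realize_sgnF] at h1
      convert h1 using 2
      funext k; fin_cases k <;> rfl
    · intro i0
      have h2' : Language.BoundedFormula.Realize
          (Language.BoundedFormula.iInf
            (fun b => (sgnF L φ (s b)).relabel
              (![Sum.inr (), Sum.inl (some b)] : Fin 2 → Option (Fin n) ⊕ Unit)))
          (Sum.elim (fun o => o.elim cc z) i) default := h2
      rw [Language.BoundedFormula.realize_iInf] at h2'
      have h4 : ((sgnF L φ (s i0)).relabel
          (![Sum.inr (), Sum.inl (some i0)] : Fin 2 → Option (Fin n) ⊕ Unit)).Realize
          (Sum.elim (fun o => o.elim cc z) i) := h2' i0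
      rw [Language.Formula.realize_relabel, realize_sgnF] at h4
      convert h4 using 2
      funext k; fin_cases k <;> rfl
  · rintro ⟨a, h1, h2⟩
    refine ⟨fun _ => a, ?_⟩
    rw [Language.Formula.realize_inf]
    constructor
    · rw [Language.Formula.realize_relabel, realize_sgnF]
      convert h1 using 2
      funext k; fin_cases k <;> rfl
    · show Language.BoundedFormula.Realize _ _ default
      rw [Language.BoundedFormula.realize_iInf]
      intro b
      have h4 := h2 b
      show Language.Formula.Realize _ _
      rw [Language.Formula.realize_relabel, realize_sgnF]
      convert h4 using 2
      funext k; fin_cases k <;> rfl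

lemma deltaHolds_map {N : Type u'} [L.Structure N] (f : M ↪ₑ[L] N)
    (φ : L.Formula (Fin 2)) {n : ℕ} (t : Bool) (s : Fin n → Bool) (z : Fin n → M) (cc : M) :
    DeltaHolds L N φ t s (f ∘ z) (f cc) ↔ DeltaHolds L M φ t s z cc := by
  rw [← realize_deltaF, ← realize_deltaF]
  have h := f.map_formula (deltaF L φ n t s) (fun o => o.elim cc z)
  have he : (f ∘ fun o : Option (Fin n) => o.elim cc z)
      = (fun o : Option (Fin n) => o.elim (f cc) (f ∘ z)) := by
    funext o; cases o <;> rfl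
  rw [he] at h
  exact h

/-- any good configuration of a φ-type `p` has size at most `ID(φ)`. -/
theorem goodConfig_size_le_ID (φ : L.Formula (Fin 2)) (n : ℕ) (hID : HasID L M φ n)
    (Θ : Set (L.Formula Unit)) (B : Set M) (hB : ∀ b ∈ B, RealizesTheta L M Θ b)
    (p : M → Bool) (hp : IsPhiType L M φ B p)
    (K : ℕ) (c : Fin K → Bool → M) (hc : GoodConfig L M φ n Θ B p K c) :
    K ≤ n := by
  by_contra hK
  push_neg at hK
  have h1 : n + 1 ≤ K := hK
  obtain ⟨hTheta, ⟨N, f, a0, ha0⟩, hSame⟩ := hc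
  set ι : Fin (n + 1) → Fin K := Fin.castLE h1 with hι
  have key : ∀ s : Fin (n + 1) → Bool, ∃ a : N,
      ∀ i : Fin (n + 1), (φ.Realize ![a, f (c (ι i) false)] ↔ s i = true) := by
    intro s
    have main : ∀ m : ℕ, m ≤ n + 1 → ∃ a : N, ∀ i : Fin (n + 1),
        (φ.Realize ![a, f (c (ι i) (if (i : ℕ) < m then false else s i))] ↔ s i = true) := by
      intro m
      induction m with
      | zero =>
        intro _
        refine ⟨a0, fun i => ?_⟩
        simpa using ha0 (c (ι i) (s i), s i) (Or.inr ⟨ι i, s i, rfl⟩)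
      | succ m ih =>
        intro hm1
        obtain ⟨a, ha⟩ := ih (le_trans (Nat.le_succ m) hm1)
        have hmn : m < n + 1 := hm1
        set j : Fin (n + 1) := ⟨m, hmn⟩ with hj
        cases hsm : s j with
        | false =>
          refine ⟨a, fun i => ?_⟩
          have heq : (if (i : ℕ) < m + 1 then false else s i)
              = (if (i : ℕ) < m then false else s i) := by
            rcases Nat.lt_trichotomy (i : ℕ) m with h | h | h
            · simp [h, Nat.lt_succ_of_lt h]
            · have hij : i = j := Fin.ext h
              simp [h, hij, hsm]
            · simp [Nat.not_lt.mpr (Nat.le_of_lt h), Nat.not_lt.mpr (Nat.succ_le_of_lt h)]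
          rw [heq]; exact ha i
        | true =>
          set sh : Fin K → Bool := fun k =>
            if hk : (k : ℕ) < n + 1 then (if (k : ℕ) < m then false else s ⟨(k : ℕ), hk⟩)
            else false with hsh
          have hSD := hSame sh (ι j)
          set z : Fin n → M := fun i0 => c (ι (j.succAbove i0))
            (if ((j.succAbove i0 : Fin (n + 1)) : ℕ) < m then false else s (j.succAbove i0))
            with hz
          have hzmem : ∀ i0, z i0 ∈ B ∪ {x | ∃ i, i ≠ ι j ∧ x = c i (sh i)} := by
            intro i0
            right
            refine ⟨ι (j.succAbove i0), ?_, ?_⟩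
            · intro hEq
              exact j.succAbove_ne i0 (Fin.castLE_injective h1 hEq)
            · have hlt : ((ι (j.succAbove i0) : Fin K) : ℕ) < n + 1 := by
                simp [hι, Fin.coe_castLE] <;> omega
              rw [hz, hsh]
              simp only [Fin.coe_castLE, hlt, dif_pos]
              congr 1
          have hd1 : DeltaHolds L (↑N) φ true (fun i0 => s (j.succAbove i0))
              (f ∘ z) (f (c (ι j) true)) := by
            refine ⟨a, ?_, fun i0 => ?_⟩
            · have h := ha j
              rw [if_neg (by simp [hj])] at h
              rw [hsm] at h
              exact h
            · exact ha (j.succAbove i0)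
          have hd2 := (deltaHolds_map L M f φ true (fun i0 => s (j.succAbove i0)) z
            (c (ι j) true)).mp hd1
          have hd3 := (hSD true (fun i0 => s (j.succAbove i0)) z hzmem).mpr hd2
          have hd4 := (deltaHolds_map L M f φ true (fun i0 => s (j.succAbove i0)) z
            (c (ι j) false)).mpr hd3
          obtain ⟨a', ha'1, ha'2⟩ := hd4
          refine ⟨a', fun i => ?_⟩
          rcases eq_or_ne i j with rfl | hij
          · rw [if_pos (by simp [hj] : ((j : Fin (n + 1)) : ℕ) < m + 1), hsm]
            exact ha'1
          · obtain ⟨i0, rfl⟩ := Fin.exists_succAbove_eq hij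
            have hne2 : ((j.succAbove i0 : Fin (n + 1)) : ℕ) ≠ m := fun hh =>
              j.succAbove_ne i0 (Fin.ext (hh.trans (by simp [hj])))
            have heq : (if ((j.succAbove i0 : Fin (n + 1)) : ℕ) < m + 1 then false
                  else s (j.succAbove i0))
                = (if ((j.succAbove i0 : Fin (n + 1)) : ℕ) < m then false
                  else s (j.succAbove i0)) := by
              by_cases hlt : ((j.succAbove i0 : Fin (n + 1)) : ℕ) < m
              · simp [hlt, Nat.lt_succ_of_lt hlt]
              · have h2 : ¬ ((j.succAbove i0 : Fin (n + 1)) : ℕ) < m + 1 := by omega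
                simp [hlt, h2]
            rw [heq]
            exact ha'2 i0
    obtain ⟨a, ha⟩ := main (n + 1) le_rfl
    refine ⟨a, fun i => ?_⟩
    have := ha i
    rwa [if_pos i.isLt] at this
  set g : Fin (n + 1) → (↑N : Type _) := fun i => f (c (ι i) false) with hg
  have hginj : Function.Injective g := by
    intro i i' hEq
    by_contra hne
    obtain ⟨a, ha⟩ := key (fun k => decide (k = i'))
    have hx2 : φ.Realize ![a, g i'] := (ha i').mpr (by simp)
    have hx2' : φ.Realize ![a, g i] := by rw [hEq]; exact hx2
    have hx1 := (ha i).mp hx2'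
    simp only [decide_eq_true_eq] at hx1
    exact hne hx1
  have hindep : PhiIndep L (↑N) φ (Set.range g) := by
    intro σ
    obtain ⟨a, ha⟩ := key (fun i => σ (f (c (ι i) false)))
    refine ⟨Language.Theory.ModelType.of _ (↑N), Language.ElementaryEmbedding.refl L (↑N),
      a, ?_⟩
    intro q hq
    obtain ⟨⟨i, hx⟩, hb⟩ := hq
    rw [← hb, ← hx]
    exact ha i
  obtain ⟨-, hcard⟩ := hID.2 N f (Set.range g) hindep
  have hrange : (Set.range g).ncard = n + 1 := by
    rw [← Set.image_univ, Set.ncard_image_of_injective _ hginj, Set.ncard_univ]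
    simp
  omega

end IET
end
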